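/- Let R be a positive definite n×n real matrix, G a positive definite b×b real matrix, Z an n×b real matrix, and X an n×p real matrix of rank p. Set H = R + ZGZᵀ and let C = [[XᵀR⁻¹X, XᵀR⁻¹Z],[ZᵀR⁻¹X, ZᵀR⁻¹Z + G⁻¹]] be the mixed-model coefficient matrix. Then log det(H) + log det(XᵀH⁻¹X) = log det(C) + log det(R) + log det(G). -/

import Mathlib

open Matrix

lemma aux_posdef_conj {n m : ℕ} {A : Matrix (Fin n) (Fin n) ℝ} (hA : A.PosDef)
    (X : Matrix (Fin n) (Fin m) ℝ) (hXinj : Function.Injective X.mulVec) :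
    (Xᵀ * A * X).PosDef := by
  have hXc : Xᵀ = Xᴴ := by
    ext i j; simp [conjTranspose]
  rw [posDef_iff_dotProduct_mulVec]
  constructor
  · rw [hXc]
    exact isHermitian_conjTranspose_mul_mul X hA.1
  · intro x hx
    have hXx : X *ᵥ x ≠ 0 := by
      intro h
      apply hx
      apply hXinj
      simpa using h
    have := hA.dotProduct_mulVec_pos hXx
    rw [hXc]
    simpa only [star_mulVec, dotProduct_mulVec, vecMul_vecMul] using this

theorem stmt_11 {n b p : ℕ} (R : Matrix (Fin n) (Fin n) ℝ) (G : Matrix (Fin b) (Fin b) ℝ)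
    (Z : Matrix (Fin n) (Fin b) ℝ) (X : Matrix (Fin n) (Fin p) ℝ)
    (hR : R.PosDef) (hG : G.PosDef) (hX : X.rank = p)
    (H : Matrix (Fin n) (Fin n) ℝ) (hH : H = R + Z * G * Zᵀ)
    (C : Matrix (Fin p ⊕ Fin b) (Fin p ⊕ Fin b) ℝ)
    (hC : C = Matrix.fromBlocks (Xᵀ * R⁻¹ * X) (Xᵀ * R⁻¹ * Z)
                (Zᵀ * R⁻¹ * X) (Zᵀ * R⁻¹ * Z + G⁻¹)) :
    Real.log H.det + Real.log (Xᵀ * H⁻¹ * X).det =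
      Real.log C.det + Real.log R.det + Real.log G.det := by
  have hZc : Zᵀ = Zᴴ := by ext i j; simp [conjTranspose]
  -- injectivity of X
  have hXinj : Function.Injective X.mulVec := by
    have hrk : Module.finrank ℝ (LinearMap.range X.mulVecLin) = p := hX
    have hsum := X.mulVecLin.finrank_range_add_finrank_ker
    simp only [hrk, Module.finrank_pi, Fintype.card_fin] at hsum
    have hker : LinearMap.ker X.mulVecLin = ⊥ := by
      apply Submodule.finrank_eq_zero.mp
      omega
    have := LinearMap.ker_eq_bot.mp hker
    exact this
  -- basic units/posdefs
  have hRdu : IsUnit R.det := hR.det_pos.ne'.isUnit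
  have hGdu : IsUnit G.det := hG.det_pos.ne'.isUnit
  have hRu : IsUnit R := (Matrix.isUnit_iff_isUnit_det R).mpr hRdu
  have hGu : IsUnit G := (Matrix.isUnit_iff_isUnit_det G).mpr hGdu
  have hRinv : R⁻¹.PosDef := hR.inv
  have hZRZ : (Zᵀ * R⁻¹ * Z).PosSemidef := by
    rw [hZc]; exact hRinv.posSemidef.conjTranspose_mul_mul_same Z
  have hZGZ : (Z * G * Zᵀ).PosSemidef := by
    rw [hZc]; exact hG.posSemidef.mul_mul_conjTranspose_same Z
  set D' : Matrix (Fin b) (Fin b) ℝ := G⁻¹ + Zᵀ * R⁻¹ * Z with hD'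
  have hD'pd : D'.PosDef := hG.inv.add_posSemidef hZRZ
  have hD'du : IsUnit D'.det := hD'pd.det_pos.ne'.isUnit
  have hD'u : IsUnit D' := (Matrix.isUnit_iff_isUnit_det D').mpr hD'du
  have hHpd : H.PosDef := by rw [hH]; exact hR.add_posSemidef hZGZ
  -- determinant of H
  have hdetH : H.det = R.det * (G.det * D'.det) := by
    rw [hH, Matrix.mul_assoc, Matrix.det_add_mul Z (G * Zᵀ) hRdu]
    congr 1
    have : (1 : Matrix (Fin b) (Fin b) ℝ) + G * Zᵀ * R⁻¹ * Z = G * D' := by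
      rw [hD', Matrix.mul_add, Matrix.mul_nonsing_inv G hGdu]
      simp [Matrix.mul_assoc]
    rw [this, det_mul]
  -- Woodbury
  have hHinv : H⁻¹ = R⁻¹ - R⁻¹ * Z * D'⁻¹ * Zᵀ * R⁻¹ := by
    rw [hH, Matrix.add_mul_mul_inv_eq_sub R Z G Zᵀ hRu hGu (by rwa [← hD'])]
  set S : Matrix (Fin p) (Fin p) ℝ := Xᵀ * H⁻¹ * X with hS
  have hSpd : S.PosDef := aux_posdef_conj hHpd.inv X hXinj
  -- determinant of C
  set D : Matrix (Fin b) (Fin b) ℝ := Zᵀ * R⁻¹ * Z + G⁻¹ with hDdef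
  have hDD' : D = D' := add_comm _ _
  haveI : Invertible D := D.invertibleOfIsUnitDet (by rw [hDD']; exact hD'du)
  have hdetC : C.det = D'.det * S.det := by
    rw [hC, Matrix.det_fromBlocks₂₂, invOf_eq_nonsing_inv, hDD']
    congr 1
    rw [hS, hHinv]
    simp only [Matrix.mul_sub, Matrix.sub_mul, Matrix.mul_assoc]
  -- positivity for logs
  have h1 : R.det ≠ 0 := hR.det_pos.ne'
  have h2 : G.det ≠ 0 := hG.det_pos.ne'
  have h3 : D'.det ≠ 0 := hD'pd.det_pos.ne'
  have h4 : S.det ≠ 0 := hSpd.det_pos.ne'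
  rw [hdetH, hdetC, Real.log_mul h1 (mul_ne_zero h2 h3), Real.log_mul h2 h3,
    Real.log_mul h3 h4]
  ring
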